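/- Let W = Av(132, 231) ∪ Av(213, 312) ∪ Av(132, 312) ∪ Av(213, 231) ∪ {2143, 2413, 3142, 3412, 25314, 41352}. For every n ≥ 6, the number of permutations of length n in W equals 2^{n+1} − 4n + 2. -/

import Mathlib

/-- A permutation of length `n ≥ 1` in one-line notation: a nonempty list of
natural numbers that is a rearrangement of `1, …, n` where `n` is its length. -/
def IsPermList (l : List ℕ) : Prop := l ≠ [] ∧ l.Perm (List.range' 1 l.length)

instance (l : List ℕ) : Decidable (IsPermList l) :=
  inferInstanceAs (Decidable (l ≠ [] ∧ l.Perm (List.range' 1 l.length)))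

/-- The type of all (finite, nonempty) permutations. -/
abbrev Permu := {l : List ℕ // IsPermList l}

/-- Helper to construct explicit permutations. -/
def p (l : List ℕ) (h : IsPermList l := by decide) : Permu := ⟨l, h⟩

/-- Pattern containment: `σ` is contained in `τ` when some (not necessarily
contiguous) subsequence of `τ` is order isomorphic to `σ`. -/
def Contains (σ τ : Permu) : Prop :=
  ∃ u : List ℕ, u.Sublist τ.val ∧ u.length = σ.val.length ∧
    ∀ i j : ℕ, i < u.length → j < u.length →
      (u.getD i 0 < u.getD j 0 ↔ σ.val.getD i 0 < σ.val.getD j 0)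

/-- A pattern class: a set of permutations closed downwards under containment. -/
def IsPatternClass (A : Set Permu) : Prop :=
  ∀ σ τ : Permu, τ ∈ A → Contains σ τ → σ ∈ A

/-- `Av B` is the set of permutations containing no member of the set `B`. -/
def Av (B : Set Permu) : Set Permu := {π | ∀ β ∈ B, ¬ Contains β π}

/-- An isomorphism of pattern classes is a bijection which preserves and
reflects containment. -/
def IsIso {A B : Set Permu} (f : ↥A → ↥B) : Prop :=
  Function.Bijective f ∧
  ∀ σ τ : ↥A, Contains σ.val τ.val ↔ Contains (f σ).val (f τ).val

/-- The shadow of `τ`: the permutations of length one less that are contained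
in `τ`. -/
def shadow (τ : Permu) : Set Permu :=
  {σ : Permu | σ.val.length + 1 = τ.val.length ∧ Contains σ τ}
/-- Wedge class Av(132, 231). -/
def WedgeS : Set Permu := Av {p [1,3,2], p [2,3,1]}
/-- Wedge class Av(213, 312). -/
def WedgeN : Set Permu := Av {p [2,1,3], p [3,1,2]}
/-- Wedge class Av(132, 312). -/
def WedgeW : Set Permu := Av {p [1,3,2], p [3,1,2]}
/-- Wedge class Av(213, 231). -/
def WedgeE : Set Permu := Av {p [2,1,3], p [2,3,1]}
/-- The class 𝒜₅: the four wedge classes together with 2143, 2413, 3142,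
3412, 25314 and 41352. -/
def W : Set Permu := WedgeS ∪ WedgeN ∪ WedgeW ∪ WedgeE ∪
  {p [2,1,4,3], p [2,4,1,3], p [3,1,4,2], p [3,4,1,2], p [2,5,3,1,4], p [4,1,3,5,2]}


namespace S15


def Peak (l : List ℕ) : Prop := ∃ x y z, [x,y,z].Sublist l ∧ x < y ∧ z < y
def BadW (l : List ℕ) : Prop := ∃ x y z, [x,y,z].Sublist l ∧
    ((x < z ∧ z < y) ∨ (y < z ∧ z < x))
lemma peak_sublist {l l' : List ℕ} (h : l.Sublist l') : Peak l → Peak l' :=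
  fun ⟨x,y,z,hu,h1,h2⟩ => ⟨x,y,z,hu.trans h,h1,h2⟩
lemma badW_sublist {l l' : List ℕ} (h : l.Sublist l') : BadW l → BadW l' :=
  fun ⟨x,y,z,hu,h1⟩ => ⟨x,y,z,hu.trans h,h1⟩

def Per (n : ℕ) : Set (List ℕ) := {l | l.Perm (List.range' 1 n)}

lemma mem_per_iff {n : ℕ} {l : List ℕ} : l ∈ Per n ↔ l.Perm (List.range' 1 n) := Iff.rfl

lemma per_finite (n : ℕ) : (Per n).Finite := by
  apply Set.Finite.ofFinset ((List.range' 1 n).permutations.toFinset)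
  intro x
  simp [Per, List.mem_permutations]

lemma per_length {n : ℕ} {l : List ℕ} (h : l ∈ Per n) : l.length = n := by
  simpa using (mem_per_iff.mp h).length_eq

lemma per_nodup {n : ℕ} {l : List ℕ} (h : l ∈ Per n) : l.Nodup :=
  (List.Perm.nodup_iff (mem_per_iff.mp h)).mpr List.nodup_range'

lemma per_mem_iff {n : ℕ} {l : List ℕ} (h : l ∈ Per n) {x : ℕ} :
    x ∈ l ↔ 1 ≤ x ∧ x ≤ n := by
  rw [(mem_per_iff.mp h).mem_iff, List.mem_range'_1]; omega

lemma range'_eq_concat (n : ℕ) :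
    List.range' 1 (n+1) = List.range' 1 n ++ [n+1] := by
  have := List.range'_concat (step := 1) (s := 1) (n := n)
  simpa [Nat.add_comm] using this

lemma per_cons_iff {n : ℕ} {l : List ℕ} : ((n+1) :: l) ∈ Per (n+1) ↔ l ∈ Per n := by
  rw [mem_per_iff, mem_per_iff]
  constructor
  · intro h
    have h2 : ((n+1) :: l).Perm ((n+1) :: List.range' 1 n) :=
      h.trans (by rw [range'_eq_concat n]; exact List.perm_append_singleton _ _)
    exact h2.cons_inv
  · intro h
    rw [range'_eq_concat n]
    exact (h.cons (n+1)).trans (List.perm_append_singleton _ _).symm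

lemma per_append_iff {n : ℕ} {l : List ℕ} : (l ++ [n+1]) ∈ Per (n+1) ↔ l ∈ Per n := by
  have hp : (l ++ [n+1]).Perm ((n+1) :: l) := List.perm_append_singleton _ _
  rw [mem_per_iff, mem_per_iff, ← mem_per_iff (n := n)]
  constructor
  · intro h
    exact per_cons_iff.mp (mem_per_iff.mpr (hp.symm.trans h))
  · intro h
    exact hp.trans (mem_per_iff.mp (per_cons_iff.mpr h))

lemma map_shift_range' (n : ℕ) :
    List.map (· + 1) (List.range' 1 n) = List.range' 2 n := by
  rw [List.range'_eq_map_range, List.range'_eq_map_range, List.map_map]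
  exact List.map_congr_left (fun a _ => by simp; omega)

lemma range'_two_cons (n : ℕ) : List.range' 1 (n+1) = 1 :: List.range' 2 n := by
  have := List.range'_succ (s := 1) (n := n) (step := 1)
  simpa using this

lemma per_shift_append_iff {n : ℕ} {l : List ℕ} :
    (List.map (· + 1) l ++ [1]) ∈ Per (n+1) ↔ l ∈ Per n := by
  rw [mem_per_iff, mem_per_iff]
  constructor
  · intro h
    have h2 : (1 :: List.map (· + 1) l).Perm (1 :: List.range' 2 n) :=
      ((List.perm_append_singleton _ _).symm.trans h).trans
        (by rw [← range'_two_cons n])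
    have h3 := h2.cons_inv
    rw [← map_shift_range' n] at h3
    have h4 := h3.map (· - 1)
    rw [List.map_map, List.map_map] at h4
    have e1 : List.map ((· - 1) ∘ (· + 1)) l = l := by
      rw [show ((· - 1) ∘ (· + 1) : ℕ → ℕ) = id by funext x; simp]; exact List.map_id l
    have e2 : List.map ((· - 1) ∘ (· + 1)) (List.range' 1 n) = List.range' 1 n := by
      rw [show ((· - 1) ∘ (· + 1) : ℕ → ℕ) = id by funext x; simp]; exact List.map_id _
    rw [e1, e2] at h4
    exact h4
  · intro h
    rw [range'_two_cons n]
    refine (List.perm_append_singleton _ _).trans ?_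
    exact ((h.map (· + 1)).trans (by rw [map_shift_range' n])).cons 1

def SV (n : ℕ) : Set (List ℕ) := {l | l ∈ Per n ∧ ¬ Peak l}

lemma sv_finite (n : ℕ) : (SV n).Finite :=
  (per_finite n).subset (fun _ h => h.1)

lemma triple_sublist_cons {x y z a : ℕ} {t : List ℕ} (h : [x,y,z].Sublist (a :: t)) :
    [x,y,z].Sublist t ∨ (x = a ∧ [y,z].Sublist t) := by
  rcases List.sublist_cons_iff.mp h with h | ⟨r, hr, hs⟩
  · exact Or.inl h
  · right
    obtain ⟨h1, h2⟩ := List.cons.injEq x [y,z] a r ▸ hr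
    exact ⟨h1, h2 ▸ hs⟩

lemma triple_sublist_concat {x y z a : ℕ} {t : List ℕ} (h : [x,y,z].Sublist (t ++ [a])) :
    [x,y,z].Sublist t ∨ (z = a ∧ [x,y].Sublist t) := by
  rcases List.sublist_append_iff.mp h with ⟨u1, u2, he, h1, h2⟩
  rcases List.sublist_singleton.mp h2 with rfl | rfl
  · rw [List.append_nil] at he
    exact Or.inl (he ▸ h1)
  · right
    have hlen : u1.length = 2 := by
      have := congrArg List.length he
      simp at this
      omega
    obtain ⟨b, c, rfl⟩ := List.length_eq_two.mp hlen
    simp at he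
    obtain ⟨rfl, rfl, rfl⟩ := he
    exact ⟨rfl, h1⟩

lemma pair_sublist_concat {y z a : ℕ} {t : List ℕ} (h : [y,z].Sublist (t ++ [a])) :
    [y,z].Sublist t ∨ (z = a ∧ [y].Sublist t) := by
  rcases List.sublist_append_iff.mp h with ⟨u1, u2, he, h1, h2⟩
  rcases List.sublist_singleton.mp h2 with rfl | rfl
  · rw [List.append_nil] at he
    exact Or.inl (he ▸ h1)
  · right
    have hlen : u1.length = 1 := by
      have := congrArg List.length he
      simp at this
      omega
    obtain ⟨b, rfl⟩ := List.length_eq_one_iff.mp hlen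
    simp at he
    obtain ⟨rfl, rfl⟩ := he
    exact ⟨rfl, h1⟩

lemma sv_succ (n : ℕ) (hn : 1 ≤ n) :
    SV (n+1) = ((n+1) :: ·) '' SV n ∪ (· ++ [n+1]) '' SV n := by
  ext l
  constructor
  · rintro ⟨hper, hpeak⟩
    have hmem : (n+1) ∈ l := (per_mem_iff hper).mpr (by omega)
    obtain ⟨s, t, rfl⟩ := List.append_of_mem hmem
    have hnd := per_nodup hper
    rcases t with _ | ⟨c, t2⟩
    · -- l = s ++ [n+1]
      right
      refine ⟨s, ⟨per_append_iff.mp hper, fun h => hpeak (peak_sublist (List.sublist_append_left _ _) h)⟩, rfl⟩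
    · rcases s with _ | ⟨a, s'⟩
      · -- l = (n+1) :: c :: t2
        left
        refine ⟨c :: t2, ⟨per_cons_iff.mp (by simpa using hper),
          fun h => hpeak (peak_sublist (by simpa using List.sublist_cons_self (n+1) (c :: t2)) h)⟩, by simp⟩
      · -- both nonempty
        exfalso
        apply hpeak
        have ha : a < n+1 := by
          have hmem' : a ∈ (a :: s') ++ (n+1) :: c :: t2 := by simp
          have hb := (per_mem_iff hper).mp hmem'
          have hne : a ≠ n+1 := by
            intro h
            subst h
            rw [List.nodup_append] at hnd
            exact hnd.2.2 _ List.mem_cons_self _ List.mem_cons_self rfl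
          omega
        have hc : c < n+1 := by
          have hmem' : c ∈ (a :: s') ++ (n+1) :: c :: t2 := by simp
          have hb := (per_mem_iff hper).mp hmem'
          have hnd2 : ((n+1) :: c :: t2).Nodup :=
            (List.sublist_append_right _ _).nodup hnd
          have hne : c ≠ n+1 := by
            intro h
            subst h
            simp at hnd2
          omega
        refine ⟨a, n+1, c, ?_, ha, hc⟩
        have h1 : [a].Sublist (a :: s') := List.singleton_sublist.mpr (by simp)
        have h2 : [n+1, c].Sublist ((n+1) :: c :: t2) :=
          List.cons_sublist_cons.mpr (List.cons_sublist_cons.mpr (List.nil_sublist _))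
        exact h1.append h2
  · rintro (⟨t, ⟨hper, hpeak⟩, rfl⟩ | ⟨t, ⟨hper, hpeak⟩, rfl⟩)
    · refine ⟨per_cons_iff.mpr hper, ?_⟩
      rintro ⟨x, y, z, hsub, h1, h2⟩
      rcases triple_sublist_cons hsub with h | ⟨rfl, h⟩
      · exact hpeak ⟨x, y, z, h, h1, h2⟩
      · have hy : y ∈ t := h.subset (by simp)
        have := (per_mem_iff hper).mp hy
        omega
    · refine ⟨per_append_iff.mpr hper, ?_⟩
      rintro ⟨x, y, z, hsub, h1, h2⟩
      rcases triple_sublist_concat hsub with h | ⟨rfl, h⟩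
      · exact hpeak ⟨x, y, z, h, h1, h2⟩
      · have hy : y ∈ t := h.subset (by simp)
        have := (per_mem_iff hper).mp hy
        omega

lemma cons_injective (a : ℕ) : Function.Injective (a :: · : List ℕ → List ℕ) := by
  intro x y h
  simpa using h

lemma concat_injective (a : ℕ) : Function.Injective (· ++ [a] : List ℕ → List ℕ) := by
  intro x y h
  exact List.append_cancel_right h

lemma images_disjoint {n : ℕ} (hn : 1 ≤ n) {A B : Set (List ℕ)} (hA : A ⊆ Per n) (hB : B ⊆ Per n) :
    Disjoint (((n+1) :: ·) '' A) ((· ++ [n+1]) '' B) := by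
  rw [Set.disjoint_left]
  rintro l ⟨t, ht, rfl⟩ ⟨t', ht', he⟩
  have hlen : t'.length = n := per_length (hB ht')
  cases t' with
  | nil =>
    have : t.length + 1 = 1 := by
      have := congrArg List.length he
      simpa using this
    have := per_length (hA ht)
    omega
  | cons b r =>
    have hb : n + 1 = b := by
      have h2 : (n+1) :: t = b :: (r ++ [n+1]) := by simpa using he.symm
      exact (List.cons.injEq _ _ _ _ ▸ h2).1
    have : b ∈ b :: r := by simp
    have := (per_mem_iff (hB ht')).mp this
    omega

lemma per_one : Per 1 = {[1]} := by
  ext l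
  rw [mem_per_iff]
  show l.Perm [1] ↔ _
  rw [List.perm_singleton]
  rfl

lemma no_triple_short {l : List ℕ} (h : l.length ≤ 2) {x y z : ℕ}
    (hs : [x,y,z].Sublist l) : False := by
  have := hs.length_le
  simp at this
  omega

lemma sv_card : ∀ n : ℕ, 1 ≤ n → (SV n).ncard = 2 ^ (n - 1)
  | 0, h => by omega
  | 1, _ => by
    have h1 : SV 1 = {[1]} := by
      ext l
      constructor
      · rintro ⟨hper, -⟩
        rw [per_one] at hper
        exact hper
      · rintro rfl
        refine ⟨by rw [per_one]; rfl, ?_⟩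
        rintro ⟨x, y, z, hsub, -, -⟩
        exact no_triple_short (by simp) hsub
    rw [h1]
    simp
  | (n+2), _ => by
    have hrec := sv_succ (n+1) (by omega)
    have hdisj := images_disjoint (n := n+1) (by omega) (A := SV (n+1)) (B := SV (n+1))
      (fun _ h => h.1) (fun _ h => h.1)
    have hcount : (SV (n+2)).ncard = 2 * (SV (n+1)).ncard := by
      rw [hrec, Set.ncard_union_eq hdisj ((sv_finite _).image _) ((sv_finite _).image _),
        Set.ncard_image_of_injective _ (cons_injective (n+2)),
        Set.ncard_image_of_injective _ (concat_injective (n+2))]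
      ring
    rw [hcount, sv_card (n+1) (by omega)]
    rw [show n+1-1 = n from rfl, show n+2-1 = n+1 from rfl, pow_succ]
    ring

def SW (n : ℕ) : Set (List ℕ) := {l | l ∈ Per n ∧ ¬ BadW l}

lemma sw_finite (n : ℕ) : (SW n).Finite :=
  (per_finite n).subset (fun _ h => h.1)

lemma pair_sub {u v : ℕ} {t : List ℕ} (hu : u ∈ t) (hv : v ∈ t) (hne : u ≠ v) :
    [u,v].Sublist t ∨ [v,u].Sublist t := by
  obtain ⟨s1, s2, rfl⟩ := List.append_of_mem hu
  rcases List.mem_append.mp hv with h | h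
  · right
    have h1 : [v].Sublist s1 := List.singleton_sublist.mpr h
    have h2 : [u].Sublist (u :: s2) := List.singleton_sublist.mpr (List.mem_cons_self (a := u) (l := s2))
    exact h1.append h2
  · rcases List.mem_cons.mp h with rfl | h
    · exact absurd rfl hne
    · left
      have h2 : [u,v].Sublist (u :: s2) :=
        List.cons_sublist_cons.mpr (List.singleton_sublist.mpr h)
      exact h2.trans (List.sublist_append_right s1 (u::s2))

lemma mem_front {n : ℕ} {s : List ℕ} {z x : ℕ} (hper : (s ++ [z]) ∈ Per n)
    (hx : x ∈ s) : 1 ≤ x ∧ x ≤ n ∧ x ≠ z := by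
  have hb := (per_mem_iff hper).mp (by simp [hx] : x ∈ s ++ [z])
  refine ⟨hb.1, hb.2, ?_⟩
  intro h
  subst h
  have hnd := per_nodup hper
  rw [List.nodup_append] at hnd
  exact hnd.2.2 _ hx _ (by simp) rfl

lemma last_extreme {n : ℕ} {s : List ℕ} {z : ℕ} (hper : (s ++ [z]) ∈ Per (n+1))
    (hbw : ¬ BadW (s ++ [z])) (hn : 1 ≤ n) : z = 1 ∨ z = n+1 := by
  by_contra hc
  push_neg at hc
  obtain ⟨h1, h2⟩ := hc
  have hzb := (per_mem_iff hper).mp (by simp : z ∈ s ++ [z])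
  have hone : (1:ℕ) ∈ s := by
    have : (1:ℕ) ∈ s ++ [z] := (per_mem_iff hper).mpr (by omega)
    rcases List.mem_append.mp this with h | h
    · exact h
    · simp at h; omega
  have htop : (n+1) ∈ s := by
    have : (n+1) ∈ s ++ [z] := (per_mem_iff hper).mpr (by omega)
    rcases List.mem_append.mp this with h | h
    · exact h
    · simp at h; omega
  apply hbw
  rcases pair_sub hone htop (by omega) with h | h
  · exact ⟨1, n+1, z, h.append (List.Sublist.refl [z]), Or.inl ⟨by omega, by omega⟩⟩
  · exact ⟨n+1, 1, z, h.append (List.Sublist.refl [z]), Or.inr ⟨by omega, by omega⟩⟩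

lemma front_ge_two {n : ℕ} {s : List ℕ} (hper : (s ++ [1]) ∈ Per (n+1)) :
    ∀ x ∈ s, 2 ≤ x ∧ x ≤ n+1 := by
  intro x hx
  have := mem_front hper hx
  omega

lemma shift_unshift {s : List ℕ} (h : ∀ x ∈ s, 2 ≤ x) :
    List.map (· + 1) (List.map (· - 1) s) = s := by
  rw [List.map_map]
  have : ∀ a ∈ s, ((· + 1) ∘ (· - 1)) a = id a := by
    intro a ha
    have := h a ha
    simp
    omega
  rw [List.map_congr_left this, List.map_id]

lemma badW_unshift {s : List ℕ} (h2 : ∀ x ∈ s, 2 ≤ x)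
    (hb : BadW (List.map (· - 1) s)) : BadW s := by
  obtain ⟨x, y, z, hsub, hor⟩ := hb
  obtain ⟨u', hu', he⟩ := List.sublist_map_iff.mp hsub
  obtain ⟨a, b, c, rfl⟩ := List.length_eq_three.mp
    (by have := congrArg List.length he; simpa using this.symm)
  simp at he
  obtain ⟨rfl, rfl, rfl⟩ := he
  have ha := h2 a (hu'.subset (by simp))
  have hbb := h2 b (hu'.subset (by simp))
  have hcc := h2 c (hu'.subset (by simp))
  exact ⟨a, b, c, hu', by omega⟩

lemma badW_shift {t : List ℕ} (hb : BadW (List.map (· + 1) t)) : BadW t := by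
  obtain ⟨x, y, z, hsub, hor⟩ := hb
  obtain ⟨u', hu', he⟩ := List.sublist_map_iff.mp hsub
  obtain ⟨a, b, c, rfl⟩ := List.length_eq_three.mp
    (by have := congrArg List.length he; simpa using this.symm)
  simp at he
  obtain ⟨rfl, rfl, rfl⟩ := he
  exact ⟨a, b, c, hu', by omega⟩

lemma sw_succ (n : ℕ) (hn : 1 ≤ n) :
    SW (n+1) = (· ++ [n+1]) '' SW n ∪ (fun t => List.map (· + 1) t ++ [1]) '' SW n := by
  ext l
  constructor
  · rintro ⟨hper, hbw⟩
    have hlne : l ≠ [] := by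
      intro h
      have := per_length hper
      rw [h] at this
      simp at this
    obtain ⟨s, z, rfl⟩ : ∃ s z, l = s ++ [z] := by
      rcases List.eq_nil_or_concat l with h | ⟨s, a, h⟩
      · exact absurd h hlne
      · exact ⟨s, a, by simpa [List.concat_eq_append] using h⟩
    rcases last_extreme hper hbw hn with rfl | rfl
    · -- z = 1
      right
      have h2 := front_ge_two hper
      set t := List.map (· - 1) s with ht
      have hst : List.map (· + 1) t = s := shift_unshift (fun x hx => (h2 x hx).1)
      refine ⟨t, ⟨?_, ?_⟩, by simp only []; rw [hst]⟩
      · apply per_shift_append_iff.mp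
        rw [hst]
        exact hper
      · intro hb
        exact hbw (badW_sublist (List.sublist_append_left _ _) (badW_unshift (fun x hx => (h2 x hx).1) hb))
    · -- z = n+1
      left
      exact ⟨s, ⟨per_append_iff.mp hper,
        fun h => hbw (badW_sublist (List.sublist_append_left _ _) h)⟩, rfl⟩
  · rintro (⟨t, ⟨hper, hbw⟩, rfl⟩ | ⟨t, ⟨hper, hbw⟩, rfl⟩)
    · refine ⟨per_append_iff.mpr hper, ?_⟩
      rintro ⟨x, y, z, hsub, hor⟩
      rcases triple_sublist_concat hsub with h | ⟨rfl, h⟩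
      · exact hbw ⟨x, y, z, h, hor⟩
      · have hx : x ∈ t := h.subset (by simp)
        have hy : y ∈ t := h.subset (by simp)
        have := (per_mem_iff hper).mp hx
        have := (per_mem_iff hper).mp hy
        omega
    · refine ⟨per_shift_append_iff.mpr hper, ?_⟩
      rintro ⟨x, y, z, hsub, hor⟩
      rcases triple_sublist_concat hsub with h | ⟨rfl, h⟩
      · exact hbw (badW_shift ⟨x, y, z, h, hor⟩)
      · have hx : x ∈ List.map (· + 1) t := h.subset (by simp)
        have hy : y ∈ List.map (· + 1) t := h.subset (by simp)
        obtain ⟨x', hx', rfl⟩ := List.mem_map.mp hx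
        obtain ⟨y', hy', rfl⟩ := List.mem_map.mp hy
        omega

lemma shift_append_injective : Function.Injective (fun t : List ℕ => List.map (· + 1) t ++ [1]) := by
  intro a b h
  simp only at h
  have := List.append_cancel_right h
  exact (List.map_injective_iff.mpr (fun x y h => by omega)) this

lemma sw_images_disjoint {n : ℕ} (hn : 1 ≤ n) {A B : Set (List ℕ)}
    (hA : A ⊆ Per n) (hB : B ⊆ Per n) :
    Disjoint ((· ++ [n+1]) '' A) ((fun t => List.map (· + 1) t ++ [1]) '' B) := by
  rw [Set.disjoint_left]
  rintro l ⟨t, ht, rfl⟩ ⟨t', ht', he⟩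
  have := (List.append_inj' he.symm rfl).2
  simp at this
  omega

lemma sw_card : ∀ n : ℕ, 1 ≤ n → (SW n).ncard = 2 ^ (n - 1)
  | 0, h => by omega
  | 1, _ => by
    have h1 : SW 1 = {[1]} := by
      ext l
      constructor
      · rintro ⟨hper, -⟩
        rw [per_one] at hper
        exact hper
      · rintro rfl
        refine ⟨by rw [per_one]; rfl, ?_⟩
        rintro ⟨x, y, z, hsub, -⟩
        exact no_triple_short (by simp) hsub
    rw [h1]
    simp
  | (n+2), _ => by
    have hrec := sw_succ (n+1) (by omega)
    have hdisj := sw_images_disjoint (n := n+1) (by omega) (A := SW (n+1)) (B := SW (n+1))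
      (fun _ h => h.1) (fun _ h => h.1)
    have hcount : (SW (n+2)).ncard = 2 * (SW (n+1)).ncard := by
      rw [hrec, Set.ncard_union_eq hdisj ((sw_finite _).image _) ((sw_finite _).image _),
        Set.ncard_image_of_injective _ (concat_injective (n+2)),
        Set.ncard_image_of_injective _ shift_append_injective]
      ring
    rw [hcount, sw_card (n+1) (by omega)]
    rw [show n+1-1 = n from rfl, show n+2-1 = n+1 from rfl, pow_succ]
    ring

def Vall (l : List ℕ) : Prop := ∃ x y z, [x,y,z].Sublist l ∧ y < x ∧ y < z
def BadE (l : List ℕ) : Prop := ∃ x y z, [x,y,z].Sublist l ∧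
    ((y < x ∧ x < z) ∨ (z < x ∧ x < y))
lemma vall_sublist {l l' : List ℕ} (h : l.Sublist l') : Vall l → Vall l' :=
  fun ⟨x,y,z,hu,h1,h2⟩ => ⟨x,y,z,hu.trans h,h1,h2⟩
lemma badE_sublist {l l' : List ℕ} (h : l.Sublist l') : BadE l → BadE l' :=
  fun ⟨x,y,z,hu,h1⟩ => ⟨x,y,z,hu.trans h,h1⟩

def asc (n : ℕ) : List ℕ := List.range' 1 n
def dsc (n : ℕ) : List ℕ := (List.range' 1 n).reverse

lemma asc_pairwise (n : ℕ) : (asc n).Pairwise (· < ·) :=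
  List.pairwise_lt_range' (s := 1) (n := n) 1 (by omega)

lemma dsc_pairwise (n : ℕ) : (dsc n).Pairwise (· > ·) := by
  rw [dsc, List.pairwise_reverse]
  exact asc_pairwise n

lemma asc_mem_per (n : ℕ) : asc n ∈ Per n := List.Perm.refl _

lemma dsc_mem_per (n : ℕ) : dsc n ∈ Per n := List.reverse_perm _

lemma triple_rel {R : ℕ → ℕ → Prop} {x y z : ℕ} {l : List ℕ}
    (hp : l.Pairwise R) (hs : [x,y,z].Sublist l) : R x y ∧ R x z ∧ R y z := by
  have := List.Pairwise.sublist hs hp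
  simp at this
  tauto

lemma pairwise_lt_clean {l : List ℕ} (h : l.Pairwise (· < ·)) :
    ¬ Peak l ∧ ¬ Vall l ∧ ¬ BadW l ∧ ¬ BadE l := by
  refine ⟨?_, ?_, ?_, ?_⟩
  · rintro ⟨x,y,z,hs,h1,h2⟩; have := triple_rel h hs; omega
  · rintro ⟨x,y,z,hs,h1,h2⟩; have := triple_rel h hs; omega
  · rintro ⟨x,y,z,hs,h1⟩; have := triple_rel h hs; omega
  · rintro ⟨x,y,z,hs,h1⟩; have := triple_rel h hs; omega

lemma pairwise_gt_clean {l : List ℕ} (h : l.Pairwise (· > ·)) :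
    ¬ Peak l ∧ ¬ Vall l ∧ ¬ BadW l ∧ ¬ BadE l := by
  refine ⟨?_, ?_, ?_, ?_⟩
  · rintro ⟨x,y,z,hs,h1,h2⟩; have := triple_rel h hs; omega
  · rintro ⟨x,y,z,hs,h1,h2⟩; have := triple_rel h hs; omega
  · rintro ⟨x,y,z,hs,h1⟩; have := triple_rel h hs; omega
  · rintro ⟨x,y,z,hs,h1⟩; have := triple_rel h hs; omega

instance : IsAntisymm ℕ (· < ·) := ⟨fun a b h1 h2 => absurd h1 (not_lt_of_gt h2)⟩

lemma eq_asc_of_pairwise_lt {n : ℕ} {l : List ℕ} (hper : l ∈ Per n)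
    (h : l.Pairwise (· < ·)) : l = asc n :=
  (mem_per_iff.mp hper).eq_of_pairwise (fun a b _ _ h1 h2 => absurd h1 (not_lt_of_gt h2)) h (asc_pairwise n)

lemma eq_dsc_of_pairwise_gt {n : ℕ} {l : List ℕ} (hper : l ∈ Per n)
    (h : l.Pairwise (· > ·)) : l = dsc n := by
  have h1 : l.reverse.Pairwise (· < ·) := by
    rw [List.pairwise_reverse]
    exact h
  have h2 : l.reverse ∈ Per n :=
    mem_per_iff.mpr ((List.reverse_perm l).trans (mem_per_iff.mp hper))
  have h3 := eq_asc_of_pairwise_lt h2 h1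
  rw [dsc, show (List.range' 1 n) = l.reverse from h3.symm, List.reverse_reverse]

def SVW (n : ℕ) : Set (List ℕ) := {l | l ∈ Per n ∧ ¬ Peak l ∧ ¬ BadW l}

lemma svw_finite (n : ℕ) : (SVW n).Finite :=
  (per_finite n).subset (fun _ h => h.1)

lemma dsc_succ (n : ℕ) : dsc (n+1) = (n+1) :: dsc n := by
  rw [dsc, dsc, range'_eq_concat n, List.reverse_append]
  rfl

lemma svw_succ (n : ℕ) (hn : 1 ≤ n) :
    SVW (n+1) = insert (dsc (n+1)) ((· ++ [n+1]) '' SVW n) := by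
  ext l
  constructor
  · rintro ⟨hper, hpeak, hbw⟩
    have hmem : (n+1) ∈ l := (per_mem_iff hper).mpr (by omega)
    obtain ⟨s, t, rfl⟩ := List.append_of_mem hmem
    have hnd := per_nodup hper
    rcases t with _ | ⟨c, t2⟩
    · -- ends with n+1
      right
      exact ⟨s, ⟨per_append_iff.mp hper,
        fun h => hpeak (peak_sublist (List.sublist_append_left _ _) h),
        fun h => hbw (badW_sublist (List.sublist_append_left _ _) h)⟩, rfl⟩
    · rcases s with _ | ⟨a, s'⟩
      · -- l = (n+1) :: c :: t2 : must be descending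
        left
        apply eq_dsc_of_pairwise_gt (by simpa using hper)
        simp only [List.nil_append] at hper hpeak hbw hnd ⊢
        rw [List.pairwise_cons]
        constructor
        · intro x hx
          have hb := (per_mem_iff hper).mp (show x ∈ (n+1) :: c :: t2 by simp [hx])
          have : x ≠ n+1 := by
            intro h
            subst h
            exact (List.nodup_cons.mp hnd).1 hx
          omega
        · rw [List.pairwise_iff_forall_sublist]
          intro y z hs
          have hy : y ∈ c :: t2 := hs.subset (by simp)
          have hz : z ∈ c :: t2 := hs.subset (by simp)
          have hyb := (per_mem_iff hper).mp (show y ∈ (n+1) :: c :: t2 by simp [hy])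
          have hzb := (per_mem_iff hper).mp (show z ∈ (n+1) :: c :: t2 by simp [hz])
          have hyz : y ≠ z := by
            have hnd2 : (c :: t2).Nodup := hnd.of_cons
            have := hs.nodup hnd2
            simp at this
            exact this
          have hzne : z ≠ n+1 := by
            intro h
            subst h
            exact (List.nodup_cons.mp hnd).1 hz
          rcases lt_or_gt_of_ne hyz with h | h
          · exfalso
            apply hbw
            refine ⟨n+1, y, z, List.cons_sublist_cons.mpr hs, Or.inr ⟨h, by omega⟩⟩
          · exact h
      · -- both sides nonempty: peak
        exfalso
        apply hpeak
        have ha : a < n+1 := by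
          have hb := (per_mem_iff hper).mp (show a ∈ (a :: s') ++ (n+1) :: c :: t2 by simp)
          have hne : a ≠ n+1 := by
            intro h
            subst h
            rw [List.nodup_append] at hnd
            exact hnd.2.2 _ List.mem_cons_self _ List.mem_cons_self rfl
          omega
        have hc : c < n+1 := by
          have hb := (per_mem_iff hper).mp (show c ∈ (a :: s') ++ (n+1) :: c :: t2 by simp)
          have hnd2 : ((n+1) :: c :: t2).Nodup :=
            (List.sublist_append_right _ _).nodup hnd
          have hne : c ≠ n+1 := by
            intro h
            subst h
            simp at hnd2
          omega
        refine ⟨a, n+1, c, ?_, ha, hc⟩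
        have h1 : [a].Sublist (a :: s') := List.singleton_sublist.mpr (by simp)
        have h2 : [n+1, c].Sublist ((n+1) :: c :: t2) :=
          List.cons_sublist_cons.mpr (List.cons_sublist_cons.mpr (List.nil_sublist _))
        exact h1.append h2
  · rintro (rfl | ⟨t, ⟨hper, hpeak, hbw⟩, rfl⟩)
    · have := pairwise_gt_clean (dsc_pairwise (n+1))
      exact ⟨dsc_mem_per (n+1), this.1, this.2.2.1⟩
    · refine ⟨per_append_iff.mpr hper, ?_, ?_⟩
      · rintro ⟨x, y, z, hsub, h1, h2⟩
        rcases triple_sublist_concat hsub with h | ⟨rfl, h⟩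
        · exact hpeak ⟨x, y, z, h, h1, h2⟩
        · have hy : y ∈ t := h.subset (by simp)
          have := (per_mem_iff hper).mp hy
          omega
      · rintro ⟨x, y, z, hsub, hor⟩
        rcases triple_sublist_concat hsub with h | ⟨rfl, h⟩
        · exact hbw ⟨x, y, z, h, hor⟩
        · have hx : x ∈ t := h.subset (by simp)
          have hy : y ∈ t := h.subset (by simp)
          have := (per_mem_iff hper).mp hx
          have := (per_mem_iff hper).mp hy
          omega

lemma dsc_not_mem_image {n : ℕ} (hn : 1 ≤ n) {A : Set (List ℕ)} :
    dsc (n+1) ∉ (· ++ [n+1]) '' A := by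
  rintro ⟨t, -, he⟩
  have h1 : dsc (n+1) = (List.range' 2 n).reverse ++ [1] := by
    rw [dsc, range'_two_cons n, List.reverse_cons]
  rw [h1] at he
  have := (List.append_inj' he rfl).2
  simp at this
  omega

lemma svw_card : ∀ n : ℕ, 1 ≤ n → (SVW n).ncard = n
  | 0, h => by omega
  | 1, _ => by
    have h1 : SVW 1 = {[1]} := by
      ext l
      constructor
      · rintro ⟨hper, -, -⟩
        rw [per_one] at hper
        exact hper
      · rintro rfl
        refine ⟨by rw [per_one]; rfl, ?_, ?_⟩
        · rintro ⟨x, y, z, hsub, -, -⟩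
          exact no_triple_short (by simp) hsub
        · rintro ⟨x, y, z, hsub, -⟩
          exact no_triple_short (by simp) hsub
    rw [h1]
    simp
  | (n+2), _ => by
    have hrec := svw_succ (n+1) (by omega)
    have hcount : (SVW (n+2)).ncard = (SVW (n+1)).ncard + 1 := by
      rw [hrec, Set.ncard_insert_of_notMem (dsc_not_mem_image (by omega))
        ((svw_finite _).image _),
        Set.ncard_image_of_injective _ (concat_injective (n+2))]
    rw [hcount, svw_card (n+1) (by omega)]

def SN (n : ℕ) : Set (List ℕ) := {l | l ∈ Per n ∧ ¬ Vall l}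
def SE (n : ℕ) : Set (List ℕ) := {l | l ∈ Per n ∧ ¬ BadE l}
def SVE (n : ℕ) : Set (List ℕ) := {l | l ∈ Per n ∧ ¬ Peak l ∧ ¬ BadE l}
def SAW (n : ℕ) : Set (List ℕ) := {l | l ∈ Per n ∧ ¬ Vall l ∧ ¬ BadW l}
def SAE (n : ℕ) : Set (List ℕ) := {l | l ∈ Per n ∧ ¬ Vall l ∧ ¬ BadE l}

lemma triple_sublist_reverse {x y z : ℕ} {l : List ℕ} :
    [x,y,z].Sublist l.reverse ↔ [z,y,x].Sublist l := by
  rw [show ([x,y,z] : List ℕ) = [z,y,x].reverse from rfl, List.reverse_sublist]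

lemma per_reverse {n : ℕ} {l : List ℕ} : l.reverse ∈ Per n ↔ l ∈ Per n := by
  rw [mem_per_iff, mem_per_iff]
  exact ⟨fun h => (l.reverse_perm).symm.trans h, fun h => (l.reverse_perm).trans h⟩

lemma peak_reverse {l : List ℕ} : Peak l.reverse ↔ Peak l := by
  constructor
  · rintro ⟨x,y,z,hs,h1,h2⟩
    exact ⟨z,y,x, triple_sublist_reverse.mp hs, h2, h1⟩
  · rintro ⟨x,y,z,hs,h1,h2⟩
    exact ⟨z,y,x, triple_sublist_reverse.mpr (by simpa using hs), h2, h1⟩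

lemma vall_reverse {l : List ℕ} : Vall l.reverse ↔ Vall l := by
  constructor
  · rintro ⟨x,y,z,hs,h1,h2⟩
    exact ⟨z,y,x, triple_sublist_reverse.mp hs, h2, h1⟩
  · rintro ⟨x,y,z,hs,h1,h2⟩
    exact ⟨z,y,x, triple_sublist_reverse.mpr (by simpa using hs), h2, h1⟩

lemma badW_reverse {l : List ℕ} : BadW l.reverse ↔ BadE l := by
  constructor
  · rintro ⟨x,y,z,hs,hor⟩
    exact ⟨z,y,x, triple_sublist_reverse.mp hs, by tauto⟩
  · rintro ⟨x,y,z,hs,hor⟩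
    exact ⟨z,y,x, triple_sublist_reverse.mpr (by simpa using hs), by tauto⟩

lemma badE_reverse {l : List ℕ} : BadE l.reverse ↔ BadW l := by
  constructor
  · rintro ⟨x,y,z,hs,hor⟩
    exact ⟨z,y,x, triple_sublist_reverse.mp hs, by tauto⟩
  · rintro ⟨x,y,z,hs,hor⟩
    exact ⟨z,y,x, triple_sublist_reverse.mpr (by simpa using hs), by tauto⟩

lemma se_eq_image : ∀ n : ℕ, SE n = List.reverse '' SW n := by
  intro n
  ext l
  constructor
  · rintro ⟨hper, hbe⟩
    refine ⟨l.reverse, ⟨per_reverse.mpr hper, ?_⟩, List.reverse_reverse l⟩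
    rw [badW_reverse]
    exact hbe
  · rintro ⟨t, ⟨hper, hbw⟩, rfl⟩
    refine ⟨per_reverse.mpr hper, ?_⟩
    exact fun h => hbw (badE_reverse.mp h)

lemma sve_eq_image : ∀ n : ℕ, SVE n = List.reverse '' SVW n := by
  intro n
  ext l
  constructor
  · rintro ⟨hper, hp, hbe⟩
    refine ⟨l.reverse, ⟨per_reverse.mpr hper, ?_, ?_⟩, List.reverse_reverse l⟩
    · rw [peak_reverse]; exact hp
    · rw [badW_reverse]; exact hbe
  · rintro ⟨t, ⟨hper, hp, hbw⟩, rfl⟩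
    refine ⟨per_reverse.mpr hper, ?_, ?_⟩
    · rw [peak_reverse]; exact hp
    · exact fun h => hbw (badE_reverse.mp h)

lemma sae_eq_image : ∀ n : ℕ, SAE n = List.reverse '' SAW n := by
  intro n
  ext l
  constructor
  · rintro ⟨hper, hv, hbe⟩
    refine ⟨l.reverse, ⟨per_reverse.mpr hper, ?_, ?_⟩, List.reverse_reverse l⟩
    · rw [vall_reverse]; exact hv
    · rw [badW_reverse]; exact hbe
  · rintro ⟨t, ⟨hper, hv, hbw⟩, rfl⟩
    refine ⟨per_reverse.mpr hper, ?_, ?_⟩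
    · rw [vall_reverse]; exact hv
    · exact fun h => hbw (badE_reverse.mp h)

-- complement
def cp (n : ℕ) (x : ℕ) : ℕ := n + 1 - x
def CP (n : ℕ) (l : List ℕ) : List ℕ := List.map (cp n) l

lemma cp_range' (n : ℕ) : CP n (List.range' 1 n) = (List.range' 1 n).reverse := by
  rw [CP, List.reverse_range', List.range'_eq_map_range, List.map_map]
  apply List.map_congr_left
  intro a _
  simp [cp]
  omega

lemma cp_per {n : ℕ} {l : List ℕ} (h : l ∈ Per n) : CP n l ∈ Per n := by
  rw [mem_per_iff]
  have h1 : (CP n l).Perm (CP n (List.range' 1 n)) := (mem_per_iff.mp h).map _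
  rw [cp_range'] at h1
  exact h1.trans (List.reverse_perm _)

lemma cp_cp {n : ℕ} {l : List ℕ} (h : ∀ x ∈ l, x ≤ n + 1) : CP n (CP n l) = l := by
  rw [CP, CP, List.map_map]
  have : ∀ a ∈ l, (cp n ∘ cp n) a = id a := by
    intro a ha
    have := h a ha
    simp [cp]
    omega
  rw [List.map_congr_left this, List.map_id]

lemma triple_sublist_cp {n : ℕ} {x y z : ℕ} {l : List ℕ}
    (h : [x,y,z].Sublist (CP n l)) :
    ∃ a b c, [a,b,c].Sublist l ∧ x = cp n a ∧ y = cp n b ∧ z = cp n c := by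
  obtain ⟨u', hu', he⟩ := List.sublist_map_iff.mp h
  obtain ⟨a, b, c, rfl⟩ := List.length_eq_three.mp
    (by have := congrArg List.length he; simpa using this.symm)
  simp at he
  exact ⟨a, b, c, hu', he.1, he.2.1, he.2.2⟩

lemma vall_cp {n : ℕ} {l : List ℕ} (hper : l ∈ Per n) : Vall (CP n l) ↔ Peak l := by
  constructor
  · rintro ⟨x,y,z,hs,h1,h2⟩
    obtain ⟨a,b,c,hs',rfl,rfl,rfl⟩ := triple_sublist_cp hs
    have ha := (per_mem_iff hper).mp (hs'.subset (show a ∈ [a,b,c] by simp))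
    have hb := (per_mem_iff hper).mp (hs'.subset (show b ∈ [a,b,c] by simp))
    have hc := (per_mem_iff hper).mp (hs'.subset (show c ∈ [a,b,c] by simp))
    simp [cp] at h1 h2
    exact ⟨a, b, c, hs', by omega, by omega⟩
  · rintro ⟨a,b,c,hs,h1,h2⟩
    have ha := (per_mem_iff hper).mp (hs.subset (show a ∈ [a,b,c] by simp))
    have hb := (per_mem_iff hper).mp (hs.subset (show b ∈ [a,b,c] by simp))
    have hc := (per_mem_iff hper).mp (hs.subset (show c ∈ [a,b,c] by simp))
    refine ⟨cp n a, cp n b, cp n c, ?_, ?_, ?_⟩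
    · exact List.Sublist.map (cp n) hs
    · simp [cp]; omega
    · simp [cp]; omega

lemma badW_cp {n : ℕ} {l : List ℕ} (hper : l ∈ Per n) : BadW (CP n l) ↔ BadW l := by
  constructor
  · rintro ⟨x,y,z,hs,hor⟩
    obtain ⟨a,b,c,hs',rfl,rfl,rfl⟩ := triple_sublist_cp hs
    have ha := (per_mem_iff hper).mp (hs'.subset (show a ∈ [a,b,c] by simp))
    have hb := (per_mem_iff hper).mp (hs'.subset (show b ∈ [a,b,c] by simp))
    have hc := (per_mem_iff hper).mp (hs'.subset (show c ∈ [a,b,c] by simp))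
    refine ⟨a, b, c, hs', ?_⟩
    simp [cp] at hor
    omega
  · rintro ⟨a,b,c,hs,hor⟩
    have ha := (per_mem_iff hper).mp (hs.subset (show a ∈ [a,b,c] by simp))
    have hb := (per_mem_iff hper).mp (hs.subset (show b ∈ [a,b,c] by simp))
    have hc := (per_mem_iff hper).mp (hs.subset (show c ∈ [a,b,c] by simp))
    refine ⟨cp n a, cp n b, cp n c, List.Sublist.map (cp n) hs, ?_⟩
    simp [cp]
    omega

lemma sn_eq_image : ∀ n : ℕ, SN n = CP n '' SV n := by
  intro n
  ext l
  constructor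
  · rintro ⟨hper, hv⟩
    refine ⟨CP n l, ⟨cp_per hper, ?_⟩, cp_cp (fun x hx => by
      have := (per_mem_iff hper).mp hx; omega)⟩
    rw [← vall_cp (cp_per hper)]
    rw [cp_cp (fun x hx => by have := (per_mem_iff hper).mp hx; omega)]
    exact hv
  · rintro ⟨t, ⟨hper, hp⟩, rfl⟩
    exact ⟨cp_per hper, fun h => hp ((vall_cp hper).mp h)⟩

lemma saw_eq_image : ∀ n : ℕ, SAW n = CP n '' SVW n := by
  intro n
  ext l
  constructor
  · rintro ⟨hper, hv, hbw⟩
    have hcc : CP n (CP n l) = l :=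
      cp_cp (fun x hx => by have := (per_mem_iff hper).mp hx; omega)
    refine ⟨CP n l, ⟨cp_per hper, ?_, ?_⟩, hcc⟩
    · rw [← vall_cp (cp_per hper), hcc]
      exact hv
    · rw [← badW_cp (cp_per hper), hcc]
      exact hbw
  · rintro ⟨t, ⟨hper, hp, hbw⟩, rfl⟩
    exact ⟨cp_per hper, fun h => hp ((vall_cp hper).mp h),
      fun h => hbw ((badW_cp hper).mp h)⟩

lemma cp_injOn {n : ℕ} : Set.InjOn (CP n) (Per n) := by
  intro a ha b hb h
  have hca : CP n (CP n a) = a := cp_cp (fun x hx => by have := (per_mem_iff ha).mp hx; omega)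
  have hcb : CP n (CP n b) = b := cp_cp (fun x hx => by have := (per_mem_iff hb).mp hx; omega)
  rw [← hca, ← hcb, h]

lemma sn_card (n : ℕ) (hn : 1 ≤ n) : (SN n).ncard = 2 ^ (n - 1) := by
  rw [sn_eq_image n, Set.ncard_image_of_injOn (cp_injOn.mono (fun _ h => h.1)),
    sv_card n hn]

lemma se_card (n : ℕ) (hn : 1 ≤ n) : (SE n).ncard = 2 ^ (n - 1) := by
  rw [se_eq_image n, Set.ncard_image_of_injective _ List.reverse_injective, sw_card n hn]

lemma saw_card (n : ℕ) (hn : 1 ≤ n) : (SAW n).ncard = n := by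
  rw [saw_eq_image n, Set.ncard_image_of_injOn (cp_injOn.mono (fun _ h => h.1)),
    svw_card n hn]

lemma sve_card (n : ℕ) (hn : 1 ≤ n) : (SVE n).ncard = n := by
  rw [sve_eq_image n, Set.ncard_image_of_injective _ List.reverse_injective, svw_card n hn]

lemma sae_card (n : ℕ) (hn : 1 ≤ n) : (SAE n).ncard = n := by
  rw [sae_eq_image n, Set.ncard_image_of_injective _ List.reverse_injective, saw_card n hn]

-- monotone lemmas
lemma mono_of_peak_vall : ∀ l : List ℕ, ¬ Peak l → ¬ Vall l → l.Nodup →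
    l.Pairwise (·<·) ∨ l.Pairwise (·>·)
  | [] => fun _ _ _ => Or.inl List.Pairwise.nil
  | [a] => fun _ _ _ => Or.inl (by simp)
  | a :: b :: t => by
    intro hp hv hnd
    have htail : ¬ Peak (b :: t) ∧ ¬ Vall (b :: t) := by
      constructor
      · exact fun h => hp (peak_sublist (List.sublist_cons_self a (b::t)) h)
      · exact fun h => hv (vall_sublist (List.sublist_cons_self a (b::t)) h)
    obtain hih := mono_of_peak_vall (b :: t) htail.1 htail.2 hnd.of_cons
    have hab : a ≠ b := by simp at hnd; tauto
    rcases lt_or_gt_of_ne hab with h | h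
    · rcases hih with hs | hs
      · left
        rw [List.pairwise_cons]
        refine ⟨?_, hs⟩
        intro x hx
        rcases List.mem_cons.mp hx with rfl | hx
        · exact h
        · exact h.trans (List.rel_of_pairwise_cons hs hx)
      · match t with
        | [] => left; simpa using h
        | c :: t' =>
          exfalso
          apply hp
          refine ⟨a, b, c, ?_, h, List.rel_of_pairwise_cons hs (List.mem_cons_self (a := c) (l := t'))⟩
          exact List.cons_sublist_cons.mpr (List.cons_sublist_cons.mpr
            (List.singleton_sublist.mpr (List.mem_cons_self (a := c) (l := t'))))
    · rcases hih with hs | hs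
      · match t with
        | [] => right; simpa using h
        | c :: t' =>
          exfalso
          apply hv
          refine ⟨a, b, c, ?_, h, List.rel_of_pairwise_cons hs (List.mem_cons_self (a := c) (l := t'))⟩
          exact List.cons_sublist_cons.mpr (List.cons_sublist_cons.mpr
            (List.singleton_sublist.mpr (List.mem_cons_self (a := c) (l := t'))))
      · right
        rw [List.pairwise_cons]
        refine ⟨?_, hs⟩
        intro x hx
        rcases List.mem_cons.mp hx with rfl | hx
        · exact h
        · exact (List.rel_of_pairwise_cons hs hx).trans h

lemma mono_of_badWE : ∀ l : List ℕ, ¬ BadW l → ¬ BadE l → l.Nodup →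
    l.Pairwise (·<·) ∨ l.Pairwise (·>·)
  | [] => fun _ _ _ => Or.inl List.Pairwise.nil
  | a :: t => by
    intro hw he hnd
    have htail : ¬ BadW t ∧ ¬ BadE t := by
      constructor
      · exact fun h => hw (badW_sublist (List.sublist_cons_self a t) h)
      · exact fun h => he (badE_sublist (List.sublist_cons_self a t) h)
    obtain hih := mono_of_badWE t htail.1 htail.2 hnd.of_cons
    have hane : ∀ x ∈ t, a ≠ x := by
      intro x hx h; subst h; exact (List.nodup_cons.mp hnd).1 hx
    have hext : (∀ x ∈ t, a < x) ∨ (∀ x ∈ t, x < a) := by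
      by_contra hc
      push_neg at hc
      obtain ⟨⟨u, hu, hua⟩, v, hv, hva⟩ := hc
      have hua' : u < a := lt_of_le_of_ne hua (fun h => hane u hu h.symm)
      have hva' : a < v := lt_of_le_of_ne hva (hane v hv)
      have huv : u ≠ v := by omega
      apply he
      rcases pair_sub hu hv huv with h | h
      · exact ⟨a, u, v, List.cons_sublist_cons.mpr h, Or.inl ⟨hua', hva'⟩⟩
      · exact ⟨a, v, u, List.cons_sublist_cons.mpr h, Or.inr ⟨hua', hva'⟩⟩
    rcases hext with hext | hext
    · left
      rw [List.pairwise_cons]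
      refine ⟨hext, ?_⟩
      rcases hih with hs | hs
      · exact hs
      · match t with
        | [] => exact List.Pairwise.nil
        | [u] => simp
        | u :: v :: t' =>
          exfalso
          apply hw
          have hvu : v < u := List.rel_of_pairwise_cons hs (List.mem_cons_self (a := v) (l := t'))
          refine ⟨a, u, v, ?_, Or.inl ⟨hext v (by simp), hvu⟩⟩
          exact List.cons_sublist_cons.mpr (List.cons_sublist_cons.mpr
            (List.singleton_sublist.mpr (List.mem_cons_self (a := v) (l := t'))))
    · right
      rw [List.pairwise_cons]
      refine ⟨hext, ?_⟩
      rcases hih with hs | hs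
      · match t with
        | [] => exact List.Pairwise.nil
        | [u] => simp
        | u :: v :: t' =>
          exfalso
          apply hw
          have hvu : u < v := List.rel_of_pairwise_cons hs (List.mem_cons_self (a := v) (l := t'))
          refine ⟨a, u, v, ?_, Or.inr ⟨hvu, hext v (by simp)⟩⟩
          exact List.cons_sublist_cons.mpr (List.cons_sublist_cons.mpr
            (List.singleton_sublist.mpr (List.mem_cons_self (a := v) (l := t'))))
      · exact hs

def AD (n : ℕ) : Set (List ℕ) := {asc n, dsc n}

lemma asc_mem_all (n : ℕ) : asc n ∈ SV n ∧ asc n ∈ SN n ∧ asc n ∈ SW n ∧ asc n ∈ SE n := by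
  have h := pairwise_lt_clean (asc_pairwise n)
  exact ⟨⟨asc_mem_per n, h.1⟩, ⟨asc_mem_per n, h.2.1⟩, ⟨asc_mem_per n, h.2.2.1⟩,
    ⟨asc_mem_per n, h.2.2.2⟩⟩

lemma dsc_mem_all (n : ℕ) : dsc n ∈ SV n ∧ dsc n ∈ SN n ∧ dsc n ∈ SW n ∧ dsc n ∈ SE n := by
  have h := pairwise_gt_clean (dsc_pairwise n)
  exact ⟨⟨dsc_mem_per n, h.1⟩, ⟨dsc_mem_per n, h.2.1⟩, ⟨dsc_mem_per n, h.2.2.1⟩,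
    ⟨dsc_mem_per n, h.2.2.2⟩⟩

lemma svw_inter_saw (n : ℕ) : SVW n ∩ SAW n = AD n := by
  ext l
  constructor
  · rintro ⟨⟨hper, hp, hbw⟩, ⟨-, hv, -⟩⟩
    rcases mono_of_peak_vall l hp hv (per_nodup hper) with h | h
    · exact Or.inl (eq_asc_of_pairwise_lt hper h)
    · exact Or.inr (eq_dsc_of_pairwise_gt hper h)
  · rintro (rfl | rfl)
    · have h := pairwise_lt_clean (asc_pairwise n)
      exact ⟨⟨asc_mem_per n, h.1, h.2.2.1⟩, ⟨asc_mem_per n, h.2.1, h.2.2.1⟩⟩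
    · have h := pairwise_gt_clean (dsc_pairwise n)
      exact ⟨⟨dsc_mem_per n, h.1, h.2.2.1⟩, ⟨dsc_mem_per n, h.2.1, h.2.2.1⟩⟩

lemma sve_inter_sae (n : ℕ) : SVE n ∩ SAE n = AD n := by
  ext l
  constructor
  · rintro ⟨⟨hper, hp, hbe⟩, ⟨-, hv, -⟩⟩
    rcases mono_of_peak_vall l hp hv (per_nodup hper) with h | h
    · exact Or.inl (eq_asc_of_pairwise_lt hper h)
    · exact Or.inr (eq_dsc_of_pairwise_gt hper h)
  · rintro (rfl | rfl)
    · have h := pairwise_lt_clean (asc_pairwise n)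
      exact ⟨⟨asc_mem_per n, h.1, h.2.2.2⟩, ⟨asc_mem_per n, h.2.1, h.2.2.2⟩⟩
    · have h := pairwise_gt_clean (dsc_pairwise n)
      exact ⟨⟨dsc_mem_per n, h.1, h.2.2.2⟩, ⟨dsc_mem_per n, h.2.1, h.2.2.2⟩⟩

lemma sw_inter_se (n : ℕ) : SW n ∩ SE n = AD n := by
  ext l
  constructor
  · rintro ⟨⟨hper, hbw⟩, ⟨-, hbe⟩⟩
    rcases mono_of_badWE l hbw hbe (per_nodup hper) with h | h
    · exact Or.inl (eq_asc_of_pairwise_lt hper h)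
    · exact Or.inr (eq_dsc_of_pairwise_gt hper h)
  · rintro (rfl | rfl)
    · exact ⟨(asc_mem_all n).2.2.1, (asc_mem_all n).2.2.2⟩
    · exact ⟨(dsc_mem_all n).2.2.1, (dsc_mem_all n).2.2.2⟩

lemma asc_ne_dsc {n : ℕ} (hn : 2 ≤ n) : asc n ≠ dsc n := by
  obtain ⟨m, rfl⟩ : ∃ m, n = m + 2 := ⟨n - 2, by omega⟩
  intro h
  rw [show asc (m+2) = 1 :: List.range' 2 (m+1) from range'_two_cons (m+1),
    show dsc (m+2) = (m+2) :: dsc (m+1) from dsc_succ (m+1)] at h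
  have := (List.cons.injEq _ _ _ _ ▸ h).1
  omega

lemma ad_card {n : ℕ} (hn : 2 ≤ n) : (AD n).ncard = 2 :=
  Set.ncard_pair (asc_ne_dsc hn)

lemma ad_finite (n : ℕ) : (AD n).Finite := (Set.finite_singleton _).insert _

def SALL (n : ℕ) : Set (List ℕ) := SV n ∪ SN n ∪ SW n ∪ SE n

lemma fin_sub {n : ℕ} {A : Set (List ℕ)} (h : A ⊆ Per n) : A.Finite :=
  (per_finite n).subset h

lemma sall_card {n : ℕ} (hn : 2 ≤ n) :
    (SALL n).ncard + (4 * n - 2) = 2 ^ (n + 1) := by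
  have hn1 : 1 ≤ n := by omega
  -- finiteness
  have fV : (SV n).Finite := fin_sub (fun _ h => h.1)
  have fN : (SN n).Finite := fin_sub (fun _ h => h.1)
  have fW : (SW n).Finite := fin_sub (fun _ h => h.1)
  have fE : (SE n).Finite := fin_sub (fun _ h => h.1)
  -- step 1 : |SV ∪ SN|
  have e1 : SV n ∩ SN n = AD n := by
    ext l
    constructor
    · rintro ⟨⟨hper, hp⟩, ⟨-, hv⟩⟩
      rcases mono_of_peak_vall l hp hv (per_nodup hper) with h | h
      · exact Or.inl (eq_asc_of_pairwise_lt hper h)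
      · exact Or.inr (eq_dsc_of_pairwise_gt hper h)
    · rintro (rfl | rfl)
      · exact ⟨(asc_mem_all n).1, (asc_mem_all n).2.1⟩
      · exact ⟨(dsc_mem_all n).1, (dsc_mem_all n).2.1⟩
  have h1 : (SV n ∪ SN n).ncard + 2 = 2 ^ (n-1) + 2 ^ (n-1) := by
    have := Set.ncard_union_add_ncard_inter (SV n) (SN n) fV fN
    rw [e1, ad_card hn, sv_card n hn1, sn_card n hn1] at this
    exact this
  -- step 2 : |(SV ∪ SN) ∩ SW| = 2n - 2
  have e2 : (SV n ∪ SN n) ∩ SW n = SVW n ∪ SAW n := by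
    ext l
    simp only [Set.mem_inter_iff, Set.mem_union, SVW, SAW, SV, SN, SW,
      Set.mem_setOf_eq]
    tauto
  have h2 : ((SV n ∪ SN n) ∩ SW n).ncard + 2 = n + n := by
    have := Set.ncard_union_add_ncard_inter (SVW n) (SAW n)
      (fin_sub (fun _ h => h.1)) (fin_sub (fun _ h => h.1))
    rw [svw_inter_saw n, ad_card hn, svw_card n hn1, saw_card n hn1] at this
    rw [e2]
    exact this
  -- step 3 : |SV ∪ SN ∪ SW|
  have h3 : (SV n ∪ SN n ∪ SW n).ncard + ((SV n ∪ SN n) ∩ SW n).ncard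
      = (SV n ∪ SN n).ncard + 2 ^ (n-1) := by
    have := Set.ncard_union_add_ncard_inter (SV n ∪ SN n) (SW n) (fV.union fN) fW
    rw [sw_card n hn1] at this
    exact this
  -- step 4 : intersection with SE
  have e4 : (SV n ∪ SN n ∪ SW n) ∩ SE n = SVE n ∪ SAE n := by
    ext l
    constructor
    · rintro ⟨hl, hse⟩
      rcases hl with (hv | hnn) | hw
      · exact Or.inl ⟨hv.1, hv.2, hse.2⟩
      · exact Or.inr ⟨hnn.1, hnn.2, hse.2⟩
      · have : l ∈ AD n := by
          rw [← sw_inter_se n]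
          exact ⟨hw, hse⟩
        rcases this with rfl | rfl
        · exact Or.inl ⟨(asc_mem_all n).1.1, (asc_mem_all n).1.2, (asc_mem_all n).2.2.2.2⟩
        · exact Or.inl ⟨(dsc_mem_all n).1.1, (dsc_mem_all n).1.2, (dsc_mem_all n).2.2.2.2⟩
    · rintro (⟨hper, hp, hbe⟩ | ⟨hper, hv, hbe⟩)
      · exact ⟨Or.inl (Or.inl ⟨hper, hp⟩), ⟨hper, hbe⟩⟩
      · exact ⟨Or.inl (Or.inr ⟨hper, hv⟩), ⟨hper, hbe⟩⟩
  have h4 : ((SV n ∪ SN n ∪ SW n) ∩ SE n).ncard + 2 = n + n := by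
    have := Set.ncard_union_add_ncard_inter (SVE n) (SAE n)
      (fin_sub (fun _ h => h.1)) (fin_sub (fun _ h => h.1))
    rw [sve_inter_sae n, ad_card hn, sve_card n hn1, sae_card n hn1] at this
    rw [e4]
    exact this
  -- step 5 : total
  have h5 : (SALL n).ncard + ((SV n ∪ SN n ∪ SW n) ∩ SE n).ncard
      = (SV n ∪ SN n ∪ SW n).ncard + 2 ^ (n-1) := by
    have := Set.ncard_union_add_ncard_inter (SV n ∪ SN n ∪ SW n) (SE n)
      ((fV.union fN).union fW) fE
    rw [se_card n hn1] at this
    exact this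
  have hpow : 2 ^ (n+1) = 4 * 2 ^ (n-1) := by
    obtain ⟨m, rfl⟩ : ∃ m, n = m + 1 := ⟨n - 1, by omega⟩
    rw [show m + 1 + 1 = (m+1-1) + 2 from by omega, pow_add]
    ring
  omega



lemma contains3 (a b c : ℕ) (h : IsPermList [a,b,c]) (τ : Permu) :
    Contains (p [a,b,c] h) τ ↔ ∃ x y z, [x,y,z].Sublist τ.val ∧
      (x < y ↔ a < b) ∧ (x < z ↔ a < c) ∧ (y < x ↔ b < a) ∧
      (y < z ↔ b < c) ∧ (z < x ↔ c < a) ∧ (z < y ↔ c < b) := by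
  constructor
  · rintro ⟨u, hu, hlen, hord⟩
    obtain ⟨x, y, z, rfl⟩ := List.length_eq_three.mp hlen
    exact ⟨x, y, z, hu,
      by simpa [p] using hord 0 1 (by simp) (by simp),
      by simpa [p] using hord 0 2 (by simp) (by simp),
      by simpa [p] using hord 1 0 (by simp) (by simp),
      by simpa [p] using hord 1 2 (by simp) (by simp),
      by simpa [p] using hord 2 0 (by simp) (by simp),
      by simpa [p] using hord 2 1 (by simp) (by simp)⟩
  · rintro ⟨x, y, z, hu, h1, h2, h3, h4, h5, h6⟩
    refine ⟨[x,y,z], hu, by simp [p], ?_⟩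
    intro i j hi hj
    simp only [List.length_cons, List.length_nil] at hi hj
    interval_cases i <;> interval_cases j <;> simp_all [p]


lemma nodup_of_permu (τ : Permu) : τ.val.Nodup :=
  τ.property.2.nodup_iff.mpr List.nodup_range'

lemma triple_nodup {x y z : ℕ} {l : List ℕ} (hl : l.Nodup)
    (h : [x,y,z].Sublist l) : x ≠ y ∧ x ≠ z ∧ y ≠ z := by
  have := h.nodup hl
  simp_all

lemma mem_wedgeS_iff (τ : Permu) : τ ∈ WedgeS ↔ ¬ Peak τ.val := by
  have hnd := nodup_of_permu τ
  simp only [WedgeS, Av, Set.mem_setOf_eq, Set.mem_insert_iff, Set.mem_singleton_iff,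
    forall_eq_or_imp, forall_eq]
  rw [contains3, contains3]
  constructor
  · rintro ⟨hA, hB⟩ ⟨x, y, z, hu, h1, h2⟩
    obtain ⟨n1, n2, n3⟩ := triple_nodup hnd hu
    rcases lt_or_gt_of_ne n2 with h | h
    · exact hA ⟨x, y, z, hu, by omega, by omega, by omega, by omega, by omega, by omega⟩
    · exact hB ⟨x, y, z, hu, by omega, by omega, by omega, by omega, by omega, by omega⟩
  · intro h
    constructor
    · rintro ⟨x, y, z, hu, h1, h2, h3, h4, h5, h6⟩
      exact h ⟨x, y, z, hu, by omega, by omega⟩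
    · rintro ⟨x, y, z, hu, h1, h2, h3, h4, h5, h6⟩
      exact h ⟨x, y, z, hu, by omega, by omega⟩

lemma mem_wedgeN_iff (τ : Permu) : τ ∈ WedgeN ↔ ¬ Vall τ.val := by
  have hnd := nodup_of_permu τ
  simp only [WedgeN, Av, Set.mem_setOf_eq, Set.mem_insert_iff, Set.mem_singleton_iff,
    forall_eq_or_imp, forall_eq]
  rw [contains3, contains3]
  constructor
  · rintro ⟨hA, hB⟩ ⟨x, y, z, hu, h1, h2⟩
    obtain ⟨n1, n2, n3⟩ := triple_nodup hnd hu
    rcases lt_or_gt_of_ne n2 with h | h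
    · exact hA ⟨x, y, z, hu, by omega, by omega, by omega, by omega, by omega, by omega⟩
    · exact hB ⟨x, y, z, hu, by omega, by omega, by omega, by omega, by omega, by omega⟩
  · intro h
    constructor
    · rintro ⟨x, y, z, hu, h1, h2, h3, h4, h5, h6⟩
      exact h ⟨x, y, z, hu, by omega, by omega⟩
    · rintro ⟨x, y, z, hu, h1, h2, h3, h4, h5, h6⟩
      exact h ⟨x, y, z, hu, by omega, by omega⟩

lemma mem_wedgeW_iff (τ : Permu) : τ ∈ WedgeW ↔ ¬ BadW τ.val := by
  simp only [WedgeW, Av, Set.mem_setOf_eq, Set.mem_insert_iff, Set.mem_singleton_iff,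
    forall_eq_or_imp, forall_eq]
  rw [contains3, contains3]
  constructor
  · rintro ⟨hA, hB⟩ ⟨x, y, z, hu, h1 | h1⟩
    · exact hA ⟨x, y, z, hu, by omega, by omega, by omega, by omega, by omega, by omega⟩
    · exact hB ⟨x, y, z, hu, by omega, by omega, by omega, by omega, by omega, by omega⟩
  · intro h
    constructor
    · rintro ⟨x, y, z, hu, h1, h2, h3, h4, h5, h6⟩
      exact h ⟨x, y, z, hu, Or.inl (by omega)⟩
    · rintro ⟨x, y, z, hu, h1, h2, h3, h4, h5, h6⟩
      exact h ⟨x, y, z, hu, Or.inr (by omega)⟩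

lemma mem_wedgeE_iff (τ : Permu) : τ ∈ WedgeE ↔ ¬ BadE τ.val := by
  simp only [WedgeE, Av, Set.mem_setOf_eq, Set.mem_insert_iff, Set.mem_singleton_iff,
    forall_eq_or_imp, forall_eq]
  rw [contains3, contains3]
  constructor
  · rintro ⟨hA, hB⟩ ⟨x, y, z, hu, h1 | h1⟩
    · exact hA ⟨x, y, z, hu, by omega, by omega, by omega, by omega, by omega, by omega⟩
    · exact hB ⟨x, y, z, hu, by omega, by omega, by omega, by omega, by omega, by omega⟩
  · intro h
    constructor
    · rintro ⟨x, y, z, hu, h1, h2, h3, h4, h5, h6⟩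
      exact h ⟨x, y, z, hu, Or.inl (by omega)⟩
    · rintro ⟨x, y, z, hu, h1, h2, h3, h4, h5, h6⟩
      exact h ⟨x, y, z, hu, Or.inr (by omega)⟩


lemma mem_per_of_permu {n : ℕ} (π : Permu) (h : π.val.length = n) : π.val ∈ Per n := by
  rw [mem_per_iff, ← h]
  exact π.property.2

lemma permu_val_image (n : ℕ) (hn : 6 ≤ n) :
    Subtype.val '' {π : Permu | π ∈ W ∧ π.val.length = n} = SALL n := by
  ext l
  constructor
  · rintro ⟨π, ⟨hw, hlen⟩, rfl⟩
    have hper := mem_per_of_permu π hlen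
    rcases hw with (((hS | hN) | hWw) | hE) | hspor
    · exact Or.inl (Or.inl (Or.inl ⟨hper, (mem_wedgeS_iff π).mp hS⟩))
    · exact Or.inl (Or.inl (Or.inr ⟨hper, (mem_wedgeN_iff π).mp hN⟩))
    · exact Or.inl (Or.inr ⟨hper, (mem_wedgeW_iff π).mp hWw⟩)
    · exact Or.inr ⟨hper, (mem_wedgeE_iff π).mp hE⟩
    · exfalso
      simp only [Set.mem_insert_iff, Set.mem_singleton_iff] at hspor
      rcases hspor with rfl | rfl | rfl | rfl | rfl | rfl <;>
        (simp only [p] at hlen; simp at hlen; omega)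
  · intro hl
    have hper : l ∈ Per n := by
      rcases hl with ((⟨h,-⟩ | ⟨h,-⟩) | ⟨h,-⟩) | ⟨h,-⟩ <;> exact h
    have hlen : l.length = n := per_length hper
    have hip : IsPermList l := by
      refine ⟨?_, by rw [hlen]; exact mem_per_iff.mp hper⟩
      intro h0
      rw [h0] at hlen
      simp at hlen
      omega
    refine ⟨⟨l, hip⟩, ⟨?_, hlen⟩, rfl⟩
    rcases hl with ((⟨-,h⟩ | ⟨-,h⟩) | ⟨-,h⟩) | ⟨-,h⟩
    · exact Or.inl (Or.inl (Or.inl (Or.inl ((mem_wedgeS_iff ⟨l, hip⟩).mpr h))))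
    · exact Or.inl (Or.inl (Or.inl (Or.inr ((mem_wedgeN_iff ⟨l, hip⟩).mpr h))))
    · exact Or.inl (Or.inl (Or.inr ((mem_wedgeW_iff ⟨l, hip⟩).mpr h)))
    · exact Or.inl (Or.inr ((mem_wedgeE_iff ⟨l, hip⟩).mpr h))

end S15

/-- for n ≥ 6, W contains 2^{n+1} − 4n + 2 permutations of
length n. -/
theorem statement_15 (n : ℕ) (hn : 6 ≤ n) :
    (Set.ncard {π : Permu | π ∈ W ∧ π.val.length = n} : ℤ) =
      2 ^ (n + 1) - 4 * n + 2 := by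
  have himg := S15.permu_val_image n hn
  have hinj : (Subtype.val '' {π : Permu | π ∈ W ∧ π.val.length = n}).ncard
      = Set.ncard {π : Permu | π ∈ W ∧ π.val.length = n} :=
    Set.ncard_image_of_injective _ Subtype.val_injective
  have hcard : Set.ncard {π : Permu | π ∈ W ∧ π.val.length = n} = (S15.SALL n).ncard := by
    rw [← hinj, himg]
  have h := S15.sall_card (show 2 ≤ n by omega)
  zify [show 2 ≤ 4*n by omega] at h
  rw [hcard]
  push_cast
  linarith
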